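/- Under a splint Δ ≈ (Δ_a, Δ_s) with Δ⁺ = Δ_a⁺ ⊔ φ(Δ_s⁺), the affinized Weyl denominators satisfy, in the ring of formal power series in q with coefficients in ℤ[V] (all infinite products converge q-adically since every factor is ≡ 1 mod q): [∏_{α∈Δ_a⁺}(1−e^{−α})]·∏_{n=1}^∞[(1−q^n)^{r_a} ∏_{α∈Δ_a}(1−q^n e^{−α})] · [∏_{β∈Δ_s⁺}(1−e^{−φ(β)})]·∏_{n=1}^∞[(1−q^n)^{r_s} ∏_{β∈Δ_s}(1−q^n e^{−φ(β)})] = [∏_{γ∈Δ⁺}(1−e^{−γ})]·∏_{n=1}^∞[(1−q^n)^{r} ∏_{γ∈Δ}(1−q^n e^{−γ})] · ∏_{n=1}^∞(1−q^n)^{r_a + r_s − r}, where r_a = rank Δ_a, r_s = rank Δ_s, r = rank Δ (and r_a + r_s ≥ r). This is the relation ∏_{α∈Δ̂₁⁺}(1−e^{−α})^{mult α} ∏_{β∈Δ̂₂⁺}(1−e^{−φ∘β})^{mult β} = ∏_{γ∈Δ̂⁺}(1−e^{−γ})^{mult γ} ∏_{n≥1}(1−e^{−nδ})^{r_a+r_s−r}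 between the denominators of the untwisted affine extensions, with q = e^{−δ}. -/

import Mathlib

open Finset Filter
open Finset Filter
section aux
variable {S : Type*} [CommRing S]
lemma splintAux_mul_sub_one_mem (J : Ideal S) {a b : S} (ha : a - 1 ∈ J) (hb : b - 1 ∈ J) :
    a * b - 1 ∈ J := by
  have h : a * b - 1 = a * (b - 1) + (a - 1) := by ring
  rw [h]; exact J.add_mem (J.mul_mem_left _ hb) ha
lemma splintAux_prod_sub_one_mem (J : Ideal S) {ι : Type*} (u : Finset ι) (g : ι → S)
    (h : ∀ i ∈ u, g i - 1 ∈ J) : (∏ i ∈ u, g i) - 1 ∈ J := by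
  classical
  induction u using Finset.cons_induction with
  | empty => simp
  | cons a s ha ih =>
    rw [Finset.prod_cons]
    exact splintAux_mul_sub_one_mem J (h a (Finset.mem_cons_self a s))
      (ih fun i hi => h i (Finset.mem_cons_of_mem hi))
lemma splintAux_pow_sub_one_mem (J : Ideal S) {a : S} (ha : a - 1 ∈ J) (m : ℕ) :
    a ^ m - 1 ∈ J := by
  induction m with
  | zero => simp
  | succ n ih => rw [pow_succ]; exact splintAux_mul_sub_one_mem J ih ha
lemma splintAux_prod_sub_prod_mem (J : Ideal S) {ι : Type*} [DecidableEq ι] {s t : Finset ι}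
    (hst : s ⊆ t) (g : ι → S) (h : ∀ i ∈ t, i ∉ s → g i - 1 ∈ J) :
    (∏ i ∈ t, g i) - ∏ i ∈ s, g i ∈ J := by
  rw [← Finset.prod_sdiff hst]
  have heq : (∏ i ∈ t \ s, g i) * ∏ i ∈ s, g i - ∏ i ∈ s, g i
      = ((∏ i ∈ t \ s, g i) - 1) * ∏ i ∈ s, g i := by ring
  rw [heq]
  exact J.mul_mem_right _ (splintAux_prod_sub_one_mem J _ _ fun i hi =>
    h i (Finset.sdiff_subset hi) (Finset.mem_sdiff.mp hi).2)
end aux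
lemma splintAux_mem_span_X_pow {R : Type*} [CommRing R] {f : PowerSeries R} {N : ℕ} :
    f ∈ (Ideal.span {(PowerSeries.X : PowerSeries R)}) ^ N ↔
      ∀ i < N, PowerSeries.coeff i f = 0 := by
  rw [Ideal.span_singleton_pow, Ideal.mem_span_singleton, PowerSeries.X_pow_dvd_iff]

lemma splintAux_key_tprod {R : Type*} [CommRing R]
    [τ : TopologicalSpace (PowerSeries R)]
    (hτ : τ = (Ideal.span {(PowerSeries.X : PowerSeries R)}).adicTopology)
    (g : ℕ → PowerSeries R)
    (hg : ∀ n, g n - 1 ∈ (Ideal.span {(PowerSeries.X : PowerSeries R)}) ^ (n + 1)) :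
    Multipliable g ∧ ∀ N : ℕ,
      (∏' n, g n) - ∏ n ∈ Finset.range N, g n ∈
        (Ideal.span {(PowerSeries.X : PowerSeries R)}) ^ N := by
  set I : Ideal (PowerSeries R) := Ideal.span {(PowerSeries.X : PowerSeries R)} with hI
  have hb : ∀ x : PowerSeries R, Filter.HasBasis (nhds x) (fun _ : ℕ => True)
      (fun n => (fun y => x + y) '' ((I ^ n : Ideal (PowerSeries R)) : Set (PowerSeries R))) := by
    subst hτ
    exact fun x => Ideal.hasBasis_nhds_adic I x
  have hcong : ∀ N : ℕ, ∀ s : Finset ℕ, Finset.range N ⊆ s →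
      (∏ n ∈ s, g n) - ∏ n ∈ Finset.range N, g n ∈ I ^ N := by
    intro N s hs
    refine splintAux_prod_sub_prod_mem _ hs g fun i hi his => ?_
    have hNi : N ≤ i + 1 := by
      by_contra hc
      exact his (Finset.mem_range.mpr (by omega))
    exact Ideal.pow_le_pow_right hNi (hg i)
  set L : PowerSeries R := PowerSeries.mk
      (fun n => PowerSeries.coeff n (∏ k ∈ Finset.range (n + 1), g k)) with hL
  have hLN : ∀ N : ℕ, L - ∏ n ∈ Finset.range N, g n ∈ I ^ N := by
    intro N
    rw [hI, splintAux_mem_span_X_pow]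
    intro i hiN
    have h1 : (∏ n ∈ Finset.range N, g n) - ∏ n ∈ Finset.range (i + 1), g n ∈ I ^ (i + 1) :=
      hcong (i + 1) _ (Finset.range_subset_range.mpr (by omega))
    rw [hI, splintAux_mem_span_X_pow] at h1
    have h2 : PowerSeries.coeff i (∏ n ∈ Finset.range N, g n)
        = PowerSeries.coeff i (∏ n ∈ Finset.range (i + 1), g n) := by
      have h3 := h1 i (by omega)
      rw [map_sub, sub_eq_zero] at h3
      exact h3
    rw [map_sub, hL, PowerSeries.coeff_mk, h2, sub_self]
  have hprod : HasProd g L := by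
    refine (hb L).tendsto_right_iff.mpr ?_
    intro N _
    filter_upwards [Filter.eventually_ge_atTop (Finset.range N)] with s hs
    refine ⟨(∏ n ∈ s, g n) - L, ?_, by ring⟩
    have heq : (∏ n ∈ s, g n) - L
        = ((∏ n ∈ s, g n) - ∏ n ∈ Finset.range N, g n)
          - (L - ∏ n ∈ Finset.range N, g n) := by ring
    rw [heq]
    exact Ideal.sub_mem _ (hcong N s hs) (hLN N)
  refine ⟨hprod.multipliable, fun N => ?_⟩
  have hM : HasProd g (∏' n, g n) := hprod.multipliable.hasProd
  have hev := (hb (∏' n, g n)).tendsto_right_iff.mp hM N trivial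
  obtain ⟨s, hmem, hsN⟩ := (hev.and (Filter.eventually_ge_atTop (Finset.range N))).exists
  obtain ⟨y, hyI, hyeq⟩ := hmem
  have heq : (∏' n, g n) - ∏ n ∈ Finset.range N, g n
      = ((∏ n ∈ s, g n) - ∏ n ∈ Finset.range N, g n) - y := by
    rw [← hyeq]; ring
  rw [heq]
  exact Ideal.sub_mem _ (hcong N s hsN) hyI


open scoped RealInnerProductSpace

/-- A finite reduced crystallographic root system, given as a finite set of
vectors in a real inner product space. -/
structure IsRootSystem {V : Type*} [NormedAddCommGroup V] [InnerProductSpace ℝ V]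
    (Δ : Finset V) : Prop where
  zero_not_mem : (0 : V) ∉ Δ
  neg_mem : ∀ α ∈ Δ, -α ∈ Δ
  reflect_mem : ∀ α ∈ Δ, ∀ β ∈ Δ, β - (2 * ⟪β, α⟫ / ⟪α, α⟫) • α ∈ Δ
  crystallographic : ∀ α ∈ Δ, ∀ β ∈ Δ, ∃ n : ℤ, 2 * ⟪β, α⟫ / ⟪α, α⟫ = (n : ℝ)
  reduced : ∀ α ∈ Δ, ∀ t : ℝ, t • α ∈ Δ → t = 1 ∨ t = -1

/-- The rank of a root system: the dimension of its real linear span. -/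
noncomputable def rootRank {V : Type*} [NormedAddCommGroup V] [InnerProductSpace ℝ V]
    (Δ : Finset V) : ℕ :=
  Module.finrank ℝ (Submodule.span ℝ (Δ : Set V))

/-- `Δpos` is a positive system for the root system `Δ`. -/
def IsPositiveSystem {V : Type*} [NormedAddCommGroup V] [InnerProductSpace ℝ V]
    (Δ Δpos : Finset V) : Prop :=
  Δpos ⊆ Δ ∧ (∀ α ∈ Δ, (α ∈ Δpos ↔ -α ∉ Δpos)) ∧
    ∀ α ∈ Δpos, ∀ β ∈ Δpos, α + β ∈ Δ → α + β ∈ Δpos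

/-- The formal exponential `e^v`, an element of the group algebra `ℤ[V]`. -/
noncomputable def fexp {V : Type*} [AddCommGroup V] (v : V) : AddMonoidAlgebra ℤ V :=
  AddMonoidAlgebra.single v 1

/-- The affinized Weyl denominator of a root system `Δ` with positive system `Δ⁺`
and rank `r`, as a formal power series in `q = e^{−δ}` with coefficients in `ℤ[V]`,
where `e^v` for `v ∈ V` is evaluated through `emb : V → ℤ[V']`; the infinite product
over the grades `n ≥ 1` is a `tprod` (every factor is `≡ 1 mod q`, so it converges
in the `q`-adic topology). The positive real roots of the untwisted affine extension
are `α + nδ` (`α ∈ Δ`, `n ≥ 1`, or `α ∈ Δ⁺`, `n = 0`), all of multiplicity one, and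
the positive imaginary roots are `nδ` (`n ≥ 1`) of multiplicity `r`. -/
noncomputable def affineDenominator {V V' : Type*} [AddCommGroup V']
    [TopologicalSpace (PowerSeries (AddMonoidAlgebra ℤ V'))]
    (Δ Δpos : Finset V) (r : ℕ) (emb : V → AddMonoidAlgebra ℤ V') :
    PowerSeries (AddMonoidAlgebra ℤ V') :=
  (PowerSeries.C (∏ α ∈ Δpos, (1 - emb α))) *
    ∏' n : ℕ,
      ((1 - (PowerSeries.X : PowerSeries (AddMonoidAlgebra ℤ V')) ^ (n + 1)) ^ r *
        ∏ α ∈ Δ, (1 - PowerSeries.X ^ (n + 1) * PowerSeries.C (emb α)))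

set_option maxHeartbeats 1600000 in
set_option synthInstance.maxHeartbeats 400000 in
/-- Under a splint `Δ ≈ (Δ_a, Δ_s)` with `Δ⁺ = Δ_a⁺ ⊔ φ(Δ_s⁺)`, the affinized Weyl
denominators satisfy, in the ring of formal power series in `q` over `ℤ[V]` with its
`q`-adic topology (so that all the infinite products converge):
the product of the affine denominators of `Δ_a` and of `φ(Δ_s)` equals the affine
denominator of `Δ` times `∏_{n≥1} (1−q^n)^{r_a+r_s−r}`, where `r_a, r_s, r` are the
ranks of `Δ_a, Δ_s, Δ` (and `r_a + r_s ≥ r`). -/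
theorem splint_affine_denominator
    {V Vs : Type*} [DecidableEq V]
    [NormedAddCommGroup V] [InnerProductSpace ℝ V] [FiniteDimensional ℝ V]
    [NormedAddCommGroup Vs] [InnerProductSpace ℝ Vs] [FiniteDimensional ℝ Vs]
    -- the ambient root system `Δ` with positive system `Δ⁺`
    (Δ Δpos : Finset V) (hΔ : IsRootSystem Δ) (hpos : IsPositiveSystem Δ Δpos)
    -- the closed subsystem `Δ_a` with positive system `Δ_a⁺ = Δ_a ∩ Δ⁺`
    (Δa Δapos : Finset V) (hsub : Δa ⊆ Δ)
    (hclosed : ∀ γ ∈ Δ, (γ : V) ∈ Submodule.span ℝ (Δa : Set V) → γ ∈ Δa)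
    (hΔa : IsRootSystem Δa) (hapos : Δapos = Δa ∩ Δpos)
    -- the second stem `Δ_s` with positive system `Δ_s⁺`
    (Δs Δspos : Finset Vs) (hΔs : IsRootSystem Δs) (hspos : IsPositiveSystem Δs Δspos)
    -- the injective linear embedding `φ` with `φ(Δ_s) ⊆ Δ` and `φ(Δ_s⁺) = Δ⁺ \ Δ_a⁺`
    (φ : Vs →ₗ[ℝ] V) (hφinj : Function.Injective φ)
    (hφroots : ∀ β ∈ Δs, φ β ∈ Δ)
    (hφpos : Finset.image φ Δspos = Δpos \ Δapos)
    -- the ranks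
    (r ra rs : ℕ) (hr : r = rootRank Δ) (hra : ra = rootRank Δa) (hrs : rs = rootRank Δs) :
    letI : TopologicalSpace (PowerSeries (AddMonoidAlgebra ℤ V)) :=
      (Ideal.span {(PowerSeries.X : PowerSeries (AddMonoidAlgebra ℤ V))}).adicTopology
    r ≤ ra + rs ∧
      affineDenominator Δa Δapos ra (fun α => fexp (-α)) *
          affineDenominator Δs Δspos rs (fun β => fexp (-(φ β))) =
        affineDenominator Δ Δpos r (fun γ => fexp (-γ)) *
          ∏' n : ℕ,
            (1 - (PowerSeries.X : PowerSeries (AddMonoidAlgebra ℤ V)) ^ (n + 1)) ^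
              (ra + rs - r) := by
  classical
  letI topInst : TopologicalSpace (PowerSeries (AddMonoidAlgebra ℤ V)) :=
    (Ideal.span {(PowerSeries.X : PowerSeries (AddMonoidAlgebra ℤ V))}).adicTopology
  -- decomposition of the positive system
  have hasub : Δapos ⊆ Δpos := by rw [hapos]; exact Finset.inter_subset_right
  have hposU : Δpos = Δapos ∪ Finset.image (⇑φ) Δspos := by
    rw [hφpos, Finset.union_sdiff_of_subset hasub]
  have hdisjpos : Disjoint Δapos (Finset.image (⇑φ) Δspos) := by
    rw [hφpos]; exact Finset.disjoint_sdiff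
  -- decomposition of the full system
  have hU : Δ = Δa ∪ Finset.image (⇑φ) Δs := by
    apply Finset.Subset.antisymm
    · intro γ hγ
      by_cases hp : γ ∈ Δpos
      · rw [hposU] at hp
        rcases Finset.mem_union.mp hp with h | h
        · rw [hapos] at h
          exact Finset.mem_union_left _ (Finset.mem_inter.mp h).1
        · obtain ⟨β, hβ, hβe⟩ := Finset.mem_image.mp h
          exact Finset.mem_union_right _ (Finset.mem_image.mpr ⟨β, hspos.1 hβ, hβe⟩)
      · have hneg : -γ ∈ Δpos := by
          by_contra hn
          exact hp ((hpos.2.1 γ hγ).mpr hn)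
        rw [hposU] at hneg
        rcases Finset.mem_union.mp hneg with h | h
        · rw [hapos] at h
          have h2 := hΔa.neg_mem _ (Finset.mem_inter.mp h).1
          rw [neg_neg] at h2
          exact Finset.mem_union_left _ h2
        · obtain ⟨β, hβ, hβe⟩ := Finset.mem_image.mp h
          refine Finset.mem_union_right _
            (Finset.mem_image.mpr ⟨-β, hΔs.neg_mem _ (hspos.1 hβ), ?_⟩)
          rw [map_neg, hβe, neg_neg]
    · intro γ hγ
      rcases Finset.mem_union.mp hγ with h | h
      · exact hsub h
      · obtain ⟨β, hβ, hβe⟩ := Finset.mem_image.mp h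
        exact hβe ▸ hφroots β hβ
  have hdisj : Disjoint Δa (Finset.image (⇑φ) Δs) := by
    rw [Finset.disjoint_left]
    rintro γ hγa hγi
    obtain ⟨β, hβ, rfl⟩ := Finset.mem_image.mp hγi
    by_cases hbp : β ∈ Δspos
    · have hmem : φ β ∈ Δpos \ Δapos := by
        rw [← hφpos]; exact Finset.mem_image_of_mem _ hbp
      have h1 := Finset.mem_sdiff.mp hmem
      exact h1.2 (by rw [hapos]; exact Finset.mem_inter.mpr ⟨hγa, h1.1⟩)
    · have hbn : -β ∈ Δspos := by
        by_contra hn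
        exact hbp ((hspos.2.1 β hβ).mpr hn)
      have hmem : φ (-β) ∈ Δpos \ Δapos := by
        rw [← hφpos]; exact Finset.mem_image_of_mem _ hbn
      rw [map_neg] at hmem
      have h1 := Finset.mem_sdiff.mp hmem
      have h2 := hΔa.neg_mem _ hγa
      exact h1.2 (by rw [hapos]; exact Finset.mem_inter.mpr ⟨h2, h1.1⟩)
  -- the rank inequality
  have hrle : r ≤ ra + rs := by
    rw [hr, hra, hrs, rootRank, rootRank, rootRank]
    have h1 : Submodule.span ℝ (Δ : Set V)
        ≤ Submodule.span ℝ (Δa : Set V) ⊔ (Submodule.span ℝ (Δs : Set Vs)).map φ := by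
      rw [hU, Finset.coe_union, Submodule.span_union, Finset.coe_image, Submodule.span_image]
    calc Module.finrank ℝ (Submodule.span ℝ (Δ : Set V))
        ≤ Module.finrank ℝ
            ((Submodule.span ℝ (Δa : Set V) ⊔ (Submodule.span ℝ (Δs : Set Vs)).map φ :
              Submodule ℝ V)) := Submodule.finrank_mono h1
      _ ≤ Module.finrank ℝ (Submodule.span ℝ (Δa : Set V))
            + Module.finrank ℝ ((Submodule.span ℝ (Δs : Set Vs)).map φ) :=
          Submodule.finrank_add_le_finrank_add_finrank _ _
      _ ≤ Module.finrank ℝ (Submodule.span ℝ (Δa : Set V))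
            + Module.finrank ℝ (Submodule.span ℝ (Δs : Set Vs)) :=
          Nat.add_le_add_left (Submodule.finrank_map_le _ _) _
  refine ⟨hrle, ?_⟩
  simp only [affineDenominator]
  -- the four factor sequences
  set I : Ideal (PowerSeries (AddMonoidAlgebra ℤ V)) :=
    Ideal.span {(PowerSeries.X : PowerSeries (AddMonoidAlgebra ℤ V))} with hI
  set f : ℕ → PowerSeries (AddMonoidAlgebra ℤ V) := fun n =>
    (1 - PowerSeries.X ^ (n + 1)) ^ ra *
      ∏ α ∈ Δa, (1 - PowerSeries.X ^ (n + 1) * PowerSeries.C (fexp (-α))) with hfdef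
  set g : ℕ → PowerSeries (AddMonoidAlgebra ℤ V) := fun n =>
    (1 - PowerSeries.X ^ (n + 1)) ^ rs *
      ∏ β ∈ Δs, (1 - PowerSeries.X ^ (n + 1) * PowerSeries.C (fexp (-(φ β)))) with hgdef
  set h : ℕ → PowerSeries (AddMonoidAlgebra ℤ V) := fun n =>
    (1 - PowerSeries.X ^ (n + 1)) ^ r *
      ∏ γ ∈ Δ, (1 - PowerSeries.X ^ (n + 1) * PowerSeries.C (fexp (-γ))) with hhdef
  set k : ℕ → PowerSeries (AddMonoidAlgebra ℤ V) := fun n =>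
    (1 - PowerSeries.X ^ (n + 1)) ^ (ra + rs - r) with hkdef
  -- each factor is ≡ 1 mod I^(n+1)
  have hXc : ∀ (n : ℕ) (c : PowerSeries (AddMonoidAlgebra ℤ V)),
      (1 - PowerSeries.X ^ (n + 1) * c) - 1 ∈ I ^ (n + 1) := by
    intro n c
    rw [hI, Ideal.span_singleton_pow, Ideal.mem_span_singleton]
    exact ⟨-c, by ring⟩
  have hX1 : ∀ n : ℕ,
      (1 - PowerSeries.X ^ (n + 1) : PowerSeries (AddMonoidAlgebra ℤ V)) - 1 ∈ I ^ (n + 1) := by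
    intro n
    have := hXc n 1
    rwa [mul_one] at this
  have hfmem : ∀ n, f n - 1 ∈ I ^ (n + 1) := fun n =>
    splintAux_mul_sub_one_mem _ (splintAux_pow_sub_one_mem _ (hX1 n) ra)
      (splintAux_prod_sub_one_mem _ _ _ fun α _ => hXc n _)
  have hgmem : ∀ n, g n - 1 ∈ I ^ (n + 1) := fun n =>
    splintAux_mul_sub_one_mem _ (splintAux_pow_sub_one_mem _ (hX1 n) rs)
      (splintAux_prod_sub_one_mem _ _ _ fun β _ => hXc n _)
  have hhmem : ∀ n, h n - 1 ∈ I ^ (n + 1) := fun n =>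
    splintAux_mul_sub_one_mem _ (splintAux_pow_sub_one_mem _ (hX1 n) r)
      (splintAux_prod_sub_one_mem _ _ _ fun γ _ => hXc n _)
  have hkmem : ∀ n, k n - 1 ∈ I ^ (n + 1) := fun n =>
    splintAux_pow_sub_one_mem _ (hX1 n) (ra + rs - r)
  obtain ⟨-, hF⟩ := splintAux_key_tprod rfl f hfmem
  obtain ⟨-, hG⟩ := splintAux_key_tprod rfl g hgmem
  obtain ⟨-, hH⟩ := splintAux_key_tprod rfl h hhmem
  obtain ⟨-, hK⟩ := splintAux_key_tprod rfl k hkmem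
  -- constant terms
  have hconst : (∏ γ ∈ Δpos, (1 - fexp (-γ)))
      = (∏ α ∈ Δapos, (1 - fexp (-α))) * ∏ β ∈ Δspos, (1 - fexp (-(φ β))) := by
    rw [hposU, Finset.prod_union hdisjpos,
      Finset.prod_image fun x _ y _ hxy => hφinj hxy]
  -- termwise identity
  have hterm : ∀ n, f n * g n = h n * k n := by
    intro n
    have hprodΔ : (∏ γ ∈ Δ,
          (1 - (PowerSeries.X : PowerSeries (AddMonoidAlgebra ℤ V)) ^ (n + 1) *
            PowerSeries.C (fexp (-γ))))
        = (∏ α ∈ Δa, (1 - PowerSeries.X ^ (n + 1) * PowerSeries.C (fexp (-α))))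
          * ∏ β ∈ Δs, (1 - PowerSeries.X ^ (n + 1) * PowerSeries.C (fexp (-(φ β)))) := by
      rw [hU, Finset.prod_union hdisj,
        Finset.prod_image fun x _ y _ hxy => hφinj hxy]
    have hpe : ((1 - (PowerSeries.X : PowerSeries (AddMonoidAlgebra ℤ V)) ^ (n + 1)) ^ r)
          * ((1 - PowerSeries.X ^ (n + 1)) ^ (ra + rs - r))
        = (1 - PowerSeries.X ^ (n + 1)) ^ ra * (1 - PowerSeries.X ^ (n + 1)) ^ rs := by
      rw [← pow_add, ← pow_add]
      congr 1
      omega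
    calc f n * g n
        = ((1 - PowerSeries.X ^ (n + 1)) ^ ra * (1 - PowerSeries.X ^ (n + 1)) ^ rs)
          * ((∏ α ∈ Δa, (1 - PowerSeries.X ^ (n + 1) * PowerSeries.C (fexp (-α))))
            * ∏ β ∈ Δs, (1 - PowerSeries.X ^ (n + 1) * PowerSeries.C (fexp (-(φ β))))) := by
          rw [hfdef, hgdef]; ring
      _ = (((1 - PowerSeries.X ^ (n + 1)) ^ r)
            * ((1 - PowerSeries.X ^ (n + 1)) ^ (ra + rs - r)))
          * ((∏ α ∈ Δa, (1 - PowerSeries.X ^ (n + 1) * PowerSeries.C (fexp (-α))))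
            * ∏ β ∈ Δs, (1 - PowerSeries.X ^ (n + 1) * PowerSeries.C (fexp (-(φ β))))) := by
          rw [hpe]
      _ = h n * k n := by
          rw [hhdef, hkdef]
          simp only
          rw [hprodΔ]
          ring
  -- vanishing criterion
  have hzero : ∀ x : PowerSeries (AddMonoidAlgebra ℤ V), (∀ N, x ∈ I ^ N) → x = 0 := by
    intro x hx
    refine PowerSeries.ext fun i => ?_
    have hx2 := splintAux_mem_span_X_pow.mp (hx (i + 1)) i (by omega)
    simpa using hx2
  rw [← sub_eq_zero]
  apply hzero
  intro N
  have hfg : (∏' n, f n) * (∏' n, g n)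
      - (∏ n ∈ Finset.range N, f n) * ∏ n ∈ Finset.range N, g n ∈ I ^ N := by
    have heq : (∏' n, f n) * (∏' n, g n)
        - (∏ n ∈ Finset.range N, f n) * ∏ n ∈ Finset.range N, g n
        = (∏' n, f n) * ((∏' n, g n) - ∏ n ∈ Finset.range N, g n)
          + ((∏' n, f n) - ∏ n ∈ Finset.range N, f n) * ∏ n ∈ Finset.range N, g n := by ring
    rw [heq]
    exact Ideal.add_mem _ (Ideal.mul_mem_left _ _ (hG N)) (Ideal.mul_mem_right _ _ (hF N))
  have hhk : (∏' n, h n) * (∏' n, k n)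
      - (∏ n ∈ Finset.range N, h n) * ∏ n ∈ Finset.range N, k n ∈ I ^ N := by
    have heq : (∏' n, h n) * (∏' n, k n)
        - (∏ n ∈ Finset.range N, h n) * ∏ n ∈ Finset.range N, k n
        = (∏' n, h n) * ((∏' n, k n) - ∏ n ∈ Finset.range N, k n)
          + ((∏' n, h n) - ∏ n ∈ Finset.range N, h n) * ∏ n ∈ Finset.range N, k n := by ring
    rw [heq]
    exact Ideal.add_mem _ (Ideal.mul_mem_left _ _ (hK N)) (Ideal.mul_mem_right _ _ (hH N))
  have emid : PowerSeries.C (∏ α ∈ Δapos, (1 - fexp (-α)))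
        * PowerSeries.C (∏ β ∈ Δspos, (1 - fexp (-(φ β))))
        * ((∏ n ∈ Finset.range N, f n) * ∏ n ∈ Finset.range N, g n)
      = PowerSeries.C (∏ γ ∈ Δpos, (1 - fexp (-γ)))
        * ((∏ n ∈ Finset.range N, h n) * ∏ n ∈ Finset.range N, k n) := by
    rw [← map_mul, ← hconst, ← Finset.prod_mul_distrib, ← Finset.prod_mul_distrib]
    congr 1
    exact Finset.prod_congr rfl fun n _ => hterm n
  have heq2 : PowerSeries.C (∏ α ∈ Δapos, (1 - fexp (-α)))
          * (∏' n, f n)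
        * (PowerSeries.C (∏ β ∈ Δspos, (1 - fexp (-(φ β))))
          * ∏' n, g n)
      - PowerSeries.C (∏ γ ∈ Δpos, (1 - fexp (-γ)))
          * (∏' n, h n) * ∏' n, k n
      = PowerSeries.C (∏ α ∈ Δapos, (1 - fexp (-α)))
          * PowerSeries.C (∏ β ∈ Δspos, (1 - fexp (-(φ β))))
          * ((∏' n, f n) * (∏' n, g n)
            - (∏ n ∈ Finset.range N, f n) * ∏ n ∈ Finset.range N, g n)
        - PowerSeries.C (∏ γ ∈ Δpos, (1 - fexp (-γ)))
          * ((∏' n, h n) * (∏' n, k n)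
            - (∏ n ∈ Finset.range N, h n) * ∏ n ∈ Finset.range N, k n)
        + (PowerSeries.C (∏ α ∈ Δapos, (1 - fexp (-α)))
            * PowerSeries.C (∏ β ∈ Δspos, (1 - fexp (-(φ β))))
            * ((∏ n ∈ Finset.range N, f n) * ∏ n ∈ Finset.range N, g n)
          - PowerSeries.C (∏ γ ∈ Δpos, (1 - fexp (-γ)))
            * ((∏ n ∈ Finset.range N, h n) * ∏ n ∈ Finset.range N, k n)) := by
    ring
  rw [heq2, emid, sub_self, add_zero]
  exact Ideal.sub_mem _ (Ideal.mul_mem_left _ _ hfg) (Ideal.mul_mem_left _ _ hhk)
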